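/- arXiv:1201.5277 — 2 statements merged into one kernel-verified Lean document; each statement's English description precedes it below -/
import Mathlib

section
/- Let 𝔤 be a finite-dimensional real Lie algebra, regarded as a normed real vector space, with a symmetric invariant bilinear form B, and for continuously differentiable maps ℓ₁, ℓ₂ : ℝ → 𝔤 set ω(ℓ₁,ℓ₂) := 2∫₀¹ B(ℓ₁(σ), ℓ₂′(σ)) dσ. Let γ : ℝ → 𝔤 be C¹ with γ(0) = 0, and let ℓ₁, ℓ₂ : ℝ → 𝔤 be C¹ with ℓ₁(0) = ℓ₁(1) = 0 and ℓ₂(0) = ℓ₂(1) = 0. Then 2∫₀¹ B(γ(σ), (⁅ℓ₁,ℓ₂⁆)′(σ)) dσ = ω(⁅γ,ℓ₁⁆, ℓ₂) + ω(ℓ₁, ⁅γ,ℓ₂⁆), where ⁅·,·⁆ denotes the pointwise Lie bracket. (This identity expresses that the mixed bracket [γ,(ℓ,c)] := ([γ,ℓ], 2∫₀¹⟨γ(σ), ℓ′(σ)⟩dσ) of Definition A.2 makes the based path algebra act on the centrally extended loop algebra by derivations.) -/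
/-- A real Lie algebra structure on a normed real vector space: the Lie bracket
lives on the same underlying additive group and scalar multiplication as the
norm (a "Lie algebra regarded as a normed real vector space"). -/
class NormedLieAlgebra (L : Type*) extends
    NormedAddCommGroup L, NormedSpace ℝ L, Bracket L L where
  add_lie : ∀ x y z : L, ⁅x + y, z⁆ = ⁅x, z⁆ + ⁅y, z⁆
  lie_add : ∀ x y z : L, ⁅x, y + z⁆ = ⁅x, y⁆ + ⁅x, z⁆
  lie_self : ∀ x : L, ⁅x, x⁆ = 0
  leibniz_lie : ∀ x y z : L, ⁅x, ⁅y, z⁆⁆ = ⁅⁅x, y⁆, z⁆ + ⁅y, ⁅x, z⁆⁆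
  lie_smul : ∀ (t : ℝ) (x y : L), ⁅x, t • y⁆ = t • ⁅x, y⁆

instance NormedLieAlgebra.toLieRing {L : Type*} [NormedLieAlgebra L] :
    LieRing L where
  add_lie := NormedLieAlgebra.add_lie
  lie_add := NormedLieAlgebra.lie_add
  lie_self := NormedLieAlgebra.lie_self
  leibniz_lie := NormedLieAlgebra.leibniz_lie

instance NormedLieAlgebra.toLieAlgebra {L : Type*} [NormedLieAlgebra L] :
    LieAlgebra ℝ L where
  lie_smul := NormedLieAlgebra.lie_smul

open intervalIntegral

section Aux

variable {L M : Type*} [NormedAddCommGroup L] [NormedSpace ℝ L]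
  [FiniteDimensional ℝ L] [NormedAddCommGroup M] [NormedSpace ℝ M]

/-- Upgrade a bilinear map on a finite-dimensional normed space to a continuous
bilinear map. -/
noncomputable def contBilin (f : L →ₗ[ℝ] L →ₗ[ℝ] M) : L →L[ℝ] L →L[ℝ] M :=
  LinearMap.toContinuousLinearMap
    { toFun := fun x => LinearMap.toContinuousLinearMap (f x)
      map_add' := fun x y => by ext z; simp
      map_smul' := fun c x => by ext z; simp }

@[simp] lemma contBilin_apply (f : L →ₗ[ℝ] L →ₗ[ℝ] M) (x y : L) :
    contBilin f x y = f x y := rfl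

lemma hasDerivAt_bilin (b : L →L[ℝ] L →L[ℝ] M) {f g : ℝ → L} {f' g' : L} {x : ℝ}
    (hf : HasDerivAt f f' x) (hg : HasDerivAt g g' x) :
    HasDerivAt (fun t => b (f t) (g t)) (b f' (g x) + b (f x) g') x := by
  have hc : HasDerivAt (fun t => b (f t)) (b f') x :=
    b.hasFDerivAt.comp_hasDerivAt x hf
  exact hc.clm_apply hg

lemma continuous_bilin (b : L →L[ℝ] L →L[ℝ] M) {f g : ℝ → L}
    (hf : Continuous f) (hg : Continuous g) :
    Continuous fun t => b (f t) (g t) :=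
  b.continuous₂.comp (hf.prodMk hg)

end Aux

/-- Let `L` be a finite-dimensional real Lie algebra, regarded as a normed real
vector space, with a symmetric invariant bilinear form `B`, and set
`ω(ℓ₁,ℓ₂) := 2∫₀¹ B(ℓ₁(σ), ℓ₂′(σ)) dσ`.  For a `C¹` based path `γ` (`γ(0) = 0`)
and `C¹` based loops `ℓ₁, ℓ₂` (`ℓᵢ(0) = ℓᵢ(1) = 0`) one has
`2∫₀¹ B(γ(σ), ([ℓ₁,ℓ₂])′(σ)) dσ = ω([γ,ℓ₁],ℓ₂) + ω(ℓ₁,[γ,ℓ₂])`, where brackets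
of `L`-valued functions are taken pointwise; i.e. the based path algebra acts on
the centrally extended loop algebra by derivations. -/
theorem kacMoody_action_by_derivations
    {L : Type*} [NormedLieAlgebra L] [FiniteDimensional ℝ L]
    (B : L →ₗ[ℝ] L →ₗ[ℝ] ℝ)
    (hsymm : ∀ x y : L, B x y = B y x)
    (hinv : ∀ x y z : L, B ⁅x, y⁆ z = B x ⁅y, z⁆)
    (γ ℓ₁ ℓ₂ : ℝ → L)
    (hγ : ContDiff ℝ 1 γ) (h₁ : ContDiff ℝ 1 ℓ₁) (h₂ : ContDiff ℝ 1 ℓ₂)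
    (hγ0 : γ 0 = 0)
    (h₁0 : ℓ₁ 0 = 0) (h₁1 : ℓ₁ 1 = 0) (h₂0 : ℓ₂ 0 = 0) (h₂1 : ℓ₂ 1 = 0) :
    (2 * ∫ σ in (0:ℝ)..1, B (γ σ) (deriv (fun τ => ⁅ℓ₁ τ, ℓ₂ τ⁆) σ))
      = (2 * ∫ σ in (0:ℝ)..1, B (⁅γ σ, ℓ₁ σ⁆) (deriv ℓ₂ σ))
        + (2 * ∫ σ in (0:ℝ)..1, B (ℓ₁ σ) (deriv (fun τ => ⁅γ τ, ℓ₂ τ⁆) σ)) := by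
  classical
  -- continuous bilinear versions of the bracket and of `B`
  set brC : L →L[ℝ] L →L[ℝ] L := contBilin (LieAlgebra.ad ℝ L) with hbrC
  set BC : L →L[ℝ] L →L[ℝ] ℝ := contBilin B with hBC
  have brC_app : ∀ x y : L, brC x y = ⁅x, y⁆ := fun x y => rfl
  have BC_app : ∀ x y : L, BC x y = B x y := fun x y => rfl
  -- derivatives of the individual curves
  have hγd : Differentiable ℝ γ := hγ.differentiable one_ne_zero
  have h₁d : Differentiable ℝ ℓ₁ := h₁.differentiable one_ne_zero
  have h₂d : Differentiable ℝ ℓ₂ := h₂.differentiable one_ne_zero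
  have hγc : Continuous γ := hγ.continuous
  have h₁c : Continuous ℓ₁ := h₁.continuous
  have h₂c : Continuous ℓ₂ := h₂.continuous
  have hγ'c : Continuous (deriv γ) := hγ.continuous_deriv le_rfl
  have h₁'c : Continuous (deriv ℓ₁) := h₁.continuous_deriv le_rfl
  have h₂'c : Continuous (deriv ℓ₂) := h₂.continuous_deriv le_rfl
  have hγH : ∀ σ : ℝ, HasDerivAt γ (deriv γ σ) σ := fun σ => (hγd σ).hasDerivAt
  have h₁H : ∀ σ : ℝ, HasDerivAt ℓ₁ (deriv ℓ₁ σ) σ := fun σ => (h₁d σ).hasDerivAt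
  have h₂H : ∀ σ : ℝ, HasDerivAt ℓ₂ (deriv ℓ₂ σ) σ := fun σ => (h₂d σ).hasDerivAt
  -- derivative of the pointwise brackets
  have d12 : ∀ σ : ℝ, HasDerivAt (fun τ => ⁅ℓ₁ τ, ℓ₂ τ⁆)
      (⁅deriv ℓ₁ σ, ℓ₂ σ⁆ + ⁅ℓ₁ σ, deriv ℓ₂ σ⁆) σ := by
    intro σ
    have := hasDerivAt_bilin brC (h₁H σ) (h₂H σ)
    simpa [brC_app] using this
  have dγ2 : ∀ σ : ℝ, HasDerivAt (fun τ => ⁅γ τ, ℓ₂ τ⁆)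
      (⁅deriv γ σ, ℓ₂ σ⁆ + ⁅γ σ, deriv ℓ₂ σ⁆) σ := by
    intro σ
    have := hasDerivAt_bilin brC (hγH σ) (h₂H σ)
    simpa [brC_app] using this
  -- the three integrands, after rewriting the derivatives
  set f0 : ℝ → ℝ := fun σ => B (γ σ) (⁅deriv ℓ₁ σ, ℓ₂ σ⁆ + ⁅ℓ₁ σ, deriv ℓ₂ σ⁆)
    with hf0
  set f1 : ℝ → ℝ := fun σ => B ⁅γ σ, ℓ₁ σ⁆ (deriv ℓ₂ σ) with hf1
  set f2 : ℝ → ℝ := fun σ => B (ℓ₁ σ) (⁅deriv γ σ, ℓ₂ σ⁆ + ⁅γ σ, deriv ℓ₂ σ⁆)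
    with hf2
  set g' : ℝ → ℝ := fun σ =>
    B (deriv γ σ) ⁅ℓ₁ σ, ℓ₂ σ⁆ + B (γ σ) (⁅deriv ℓ₁ σ, ℓ₂ σ⁆ + ⁅ℓ₁ σ, deriv ℓ₂ σ⁆)
    with hg'
  -- continuity of all relevant real-valued functions
  have brc : ∀ {a b : ℝ → L}, Continuous a → Continuous b →
      Continuous fun σ => ⁅a σ, b σ⁆ := by
    intro a b ha hb
    simpa [brC_app] using continuous_bilin brC ha hb
  have Bc : ∀ {a b : ℝ → L}, Continuous a → Continuous b →
      Continuous fun σ => B (a σ) (b σ) := by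
    intro a b ha hb
    simpa [BC_app] using continuous_bilin BC ha hb
  have cf0 : Continuous f0 := Bc hγc ((brc h₁'c h₂c).add (brc h₁c h₂'c))
  have cf1 : Continuous f1 := Bc (brc hγc h₁c) h₂'c
  have cf2 : Continuous f2 := Bc h₁c ((brc hγ'c h₂c).add (brc hγc h₂'c))
  have cg' : Continuous g' :=
    (Bc hγ'c (brc h₁c h₂c)).add (Bc hγc ((brc h₁'c h₂c).add (brc h₁c h₂'c)))
  -- the fundamental theorem of calculus: ∫ g' = 0
  have hGderiv : ∀ σ : ℝ, HasDerivAt (fun τ => B (γ τ) ⁅ℓ₁ τ, ℓ₂ τ⁆) (g' σ) σ := by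
    intro σ
    have := hasDerivAt_bilin BC (hγH σ) (d12 σ)
    simpa [BC_app, hg'] using this
  have hint0 : (∫ σ in (0:ℝ)..1, g' σ) = 0 := by
    rw [intervalIntegral.integral_eq_sub_of_hasDerivAt
      (fun σ _ => hGderiv σ) (cg'.intervalIntegrable 0 1)]
    simp [h₁0, h₁1]
  -- pointwise identity f0 = f1 + f2 + g'
  have hpt : ∀ σ : ℝ, f0 σ = f1 σ + f2 σ + g' σ := by
    intro σ
    have e1 : B ⁅γ σ, ℓ₁ σ⁆ (deriv ℓ₂ σ) = B (γ σ) ⁅ℓ₁ σ, deriv ℓ₂ σ⁆ := hinv _ _ _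
    have e2 : B (ℓ₁ σ) ⁅deriv γ σ, ℓ₂ σ⁆ = -B (deriv γ σ) ⁅ℓ₁ σ, ℓ₂ σ⁆ := by
      have := hinv (ℓ₁ σ) (deriv γ σ) (ℓ₂ σ)
      rw [← this, ← lie_skew, map_neg, LinearMap.neg_apply, hinv]
    have e3 : B (ℓ₁ σ) ⁅γ σ, deriv ℓ₂ σ⁆ = -B (γ σ) ⁅ℓ₁ σ, deriv ℓ₂ σ⁆ := by
      have := hinv (ℓ₁ σ) (γ σ) (deriv ℓ₂ σ)
      rw [← this, ← lie_skew, map_neg, LinearMap.neg_apply, hinv]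
    simp only [hf0, hf1, hf2, hg', map_add]
    rw [e1, e2, e3]
    ring
  -- put everything together
  have key : (∫ σ in (0:ℝ)..1, f0 σ)
      = (∫ σ in (0:ℝ)..1, f1 σ) + (∫ σ in (0:ℝ)..1, f2 σ) := by
    have : (∫ σ in (0:ℝ)..1, f0 σ)
        = (∫ σ in (0:ℝ)..1, (f1 σ + f2 σ + g' σ)) := by
      apply intervalIntegral.integral_congr
      intro σ _
      exact hpt σ
    rw [this, intervalIntegral.integral_add (f := fun σ => f1 σ + f2 σ) ((cf1.add cf2).intervalIntegrable 0 1)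
        (cg'.intervalIntegrable 0 1),
      intervalIntegral.integral_add (cf1.intervalIntegrable 0 1)
        (cf2.intervalIntegrable 0 1), hint0, add_zero]
  have E0 : (∫ σ in (0:ℝ)..1, B (γ σ) (deriv (fun τ => ⁅ℓ₁ τ, ℓ₂ τ⁆) σ))
      = ∫ σ in (0:ℝ)..1, f0 σ :=
    intervalIntegral.integral_congr fun σ _ => by rw [(d12 σ).deriv]
  have E2 : (∫ σ in (0:ℝ)..1, B (ℓ₁ σ) (deriv (fun τ => ⁅γ τ, ℓ₂ τ⁆) σ))
      = ∫ σ in (0:ℝ)..1, f2 σ :=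
    intervalIntegral.integral_congr fun σ _ => by rw [(dγ2 σ).deriv]
  rw [E0, E2, key]
  ring
end

section
/- Let X be a topological space with an open cover {Uᵢ}_{i∈I}, let N ≥ 1, and suppose given continuous maps ρᵢ : Uᵢ → U(1) and continuous maps g_{ij} : Uᵢ ∩ Uⱼ → U(N) satisfying the cocycle condition g_{ij}(x)·g_{jk}(x) = g_{ik}(x) for all x ∈ Uᵢ ∩ Uⱼ ∩ Uₖ and the compatibility det(g_{ij}(x))·ρⱼ(x) = ρᵢ(x) for all x ∈ Uᵢ ∩ Uⱼ. Define γᵢ : Uᵢ → U(N) by γᵢ(x) := diag(ρᵢ(x)⁻¹, 1, …, 1). Then each γᵢ is continuous with det(γᵢ(x)) = ρᵢ(x)⁻¹, and the functions g′_{ij}(x) := γᵢ(x)·g_{ij}(x)·γⱼ(x)⁻¹ are continuous, satisfy the cocycle condition g′_{ij}(x)·g′_{jk}(x) = g′_{ik}(x) on triple intersections, and have det(g′_{ij}(x)) = 1 for all x, i.e. take values in SU(N). -/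
/-- Given a Čech cocycle `(ρᵢ, g_{ij})` on a cover `{Uᵢ}` of a space `X`,
consisting of continuous `U(1)`-valued functions `ρᵢ` and continuous
`U(N)`-valued transition functions `g_{ij}` satisfying the cocycle condition
and `det(g_{ij})·ρⱼ = ρᵢ` on overlaps, the gauge transformation
`γᵢ(x) = diag(ρᵢ(x)⁻¹, 1, …, 1)` is continuous with `det γᵢ = ρᵢ⁻¹`, and the
transformed transition functions `g′_{ij} = γᵢ g_{ij} γⱼ⁻¹` are continuous,
satisfy the cocycle condition, and have determinant 1, i.e. take values in
`SU(N)`. -/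
theorem unitary_cocycle_reduces_to_special_unitary
    {X : Type*} [TopologicalSpace X] {ι : Type*} {N : ℕ} (hN : 0 < N)
    (U : ι → Set X)
    (ρ : ι → X → Circle)
    (g : ι → ι → X → Matrix (Fin N) (Fin N) ℂ)
    (hρ : ∀ i, ContinuousOn (fun x => (ρ i x : ℂ)) (U i))
    (hg : ∀ i j, ContinuousOn (g i j) (U i ∩ U j))
    (hgu : ∀ i j, ∀ x ∈ U i ∩ U j, g i j x ∈ Matrix.unitaryGroup (Fin N) ℂ)
    (hcoc : ∀ i j k, ∀ x ∈ U i ∩ U j ∩ U k, g i j x * g j k x = g i k x)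
    (hcompat : ∀ i j, ∀ x ∈ U i ∩ U j, (g i j x).det * (ρ j x : ℂ) = (ρ i x : ℂ)) :
    letI γ : ι → X → Matrix (Fin N) (Fin N) ℂ := fun i x =>
      Matrix.diagonal (fun k => if k = (⟨0, hN⟩ : Fin N) then ((ρ i x : ℂ))⁻¹ else 1)
    letI g' : ι → ι → X → Matrix (Fin N) (Fin N) ℂ := fun i j x =>
      γ i x * g i j x * (γ j x)⁻¹
    (∀ i, ContinuousOn (γ i) (U i)) ∧
    (∀ i, ∀ x ∈ U i, (γ i x).det = ((ρ i x : ℂ))⁻¹) ∧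
    (∀ i j, ContinuousOn (g' i j) (U i ∩ U j)) ∧
    (∀ i j k, ∀ x ∈ U i ∩ U j ∩ U k, g' i j x * g' j k x = g' i k x) ∧
    (∀ i j, ∀ x ∈ U i ∩ U j, (g' i j x).det = 1) ∧
    (∀ i j, ∀ x ∈ U i ∩ U j, g' i j x ∈ Matrix.specialUnitaryGroup (Fin N) ℂ) := by
  set z : Fin N := ⟨0, hN⟩ with hz
  set γ : ι → X → Matrix (Fin N) (Fin N) ℂ := fun i x =>
    Matrix.diagonal (fun k => if k = z then ((ρ i x : ℂ))⁻¹ else 1) with hγ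
  -- inverse of γ
  have hinv : ∀ j x, (γ j x)⁻¹ =
      Matrix.diagonal (fun k => if k = z then (ρ j x : ℂ) else 1) := by
    intro j x
    apply Matrix.inv_eq_right_inv
    rw [hγ]
    rw [Matrix.diagonal_mul_diagonal]
    have he : (fun k : Fin N => (if k = z then ((ρ j x : ℂ))⁻¹ else 1) *
        (if k = z then (ρ j x : ℂ) else 1)) = fun _ => (1 : ℂ) := by
      funext k
      by_cases h : k = z <;>
        simp [h, inv_mul_cancel₀ (Circle.coe_ne_zero (ρ j x))]
    rw [he, Matrix.diagonal_one]
  have hdet : ∀ i x, (γ i x).det = ((ρ i x : ℂ))⁻¹ := by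
    intro i x
    rw [hγ]
    simp [Matrix.det_diagonal, Finset.prod_ite_eq']
  have hdetinv : ∀ j x, ((γ j x)⁻¹).det = (ρ j x : ℂ) := by
    intro j x
    rw [hinv]
    simp [Matrix.det_diagonal, Finset.prod_ite_eq']
  -- continuity of a diagonal matrix function
  have hdiagcont : ∀ (f : X → ℂ) (s : Set X), ContinuousOn f s →
      ContinuousOn (fun x => Matrix.diagonal
        (fun k : Fin N => if k = z then f x else 1)) s := by
    intro f s hf
    rw [continuousOn_iff_continuous_restrict] at hf ⊢
    apply continuous_matrix
    intro a b
    by_cases hab : a = b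
    · subst hab
      by_cases h0 : a = z
      · simp only [Matrix.diagonal_apply_eq, h0, if_true]
        exact hf
      · simp [Matrix.diagonal_apply_eq, h0, continuous_const]
    · simp [Matrix.diagonal_apply_ne _ hab, continuous_const]
  have hρinv : ∀ i, ContinuousOn (fun x => ((ρ i x : ℂ))⁻¹) (U i) := by
    intro i
    exact (hρ i).inv₀ (fun x _ => Circle.coe_ne_zero _)
  have hcγ : ∀ i, ContinuousOn (γ i) (U i) := fun i =>
    hdiagcont _ _ (hρinv i)
  -- unitarity of γ and its inverse
  have hdiagunit : ∀ (w : Circle),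
      Matrix.diagonal (fun k : Fin N => if k = z then (w : ℂ) else 1) ∈
        Matrix.unitaryGroup (Fin N) ℂ := by
    intro w
    rw [Matrix.mem_unitaryGroup_iff]
    have hst : star (Matrix.diagonal (fun k : Fin N => if k = z then (w : ℂ) else 1)) =
        Matrix.diagonal (fun k : Fin N => if k = z then (starRingEnd ℂ) (w : ℂ) else 1) := by
      rw [Matrix.star_eq_conjTranspose, Matrix.diagonal_conjTranspose]
      have he : star (fun k : Fin N => if k = z then (w : ℂ) else 1) =
          fun k : Fin N => if k = z then (starRingEnd ℂ) (w : ℂ) else 1 := by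
        funext k
        by_cases h : k = z <;> simp [h, Pi.star_apply, Complex.star_def]
      rw [he]
    rw [hst, Matrix.diagonal_mul_diagonal]
    have he : (fun k : Fin N => (if k = z then (w : ℂ) else 1) *
        (if k = z then (starRingEnd ℂ) (w : ℂ) else 1)) = fun _ => (1 : ℂ) := by
      funext k
      by_cases h : k = z
      · have hw : (w : ℂ) * (starRingEnd ℂ) (w : ℂ) = 1 := by
          rw [Complex.mul_conj, Circle.normSq_coe, Complex.ofReal_one]
        simp [h, hw]
      · simp [h]
    rw [he, Matrix.diagonal_one]
  have hγunit : ∀ i x, γ i x ∈ Matrix.unitaryGroup (Fin N) ℂ := by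
    intro i x
    have := hdiagunit (ρ i x)⁻¹
    simpa [Circle.coe_inv] using this
  have hγinvunit : ∀ j x, (γ j x)⁻¹ ∈ Matrix.unitaryGroup (Fin N) ℂ := by
    intro j x
    rw [hinv]
    exact hdiagunit (ρ j x)
  -- inverse cancellation
  have hcancel : ∀ j x, (γ j x)⁻¹ * γ j x = 1 := by
    intro j x
    apply Matrix.nonsing_inv_mul
    rw [hdet]
    exact isUnit_iff_ne_zero.2 (inv_ne_zero (Circle.coe_ne_zero _))
  refine ⟨hcγ, fun i x _ => hdet i x, ?_, ?_, ?_, ?_⟩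
  · -- continuity of g'
    intro i j
    have h1 : ContinuousOn (γ i) (U i ∩ U j) := (hcγ i).mono Set.inter_subset_left
    have h2 : ContinuousOn (fun x => (γ j x)⁻¹) (U i ∩ U j) := by
      have := hdiagcont (fun x => (ρ j x : ℂ)) (U j) (hρ j)
      refine ContinuousOn.congr (this.mono Set.inter_subset_right) ?_
      intro x _
      exact hinv j x
    exact (h1.mul (hg i j)).mul h2
  · -- cocycle
    intro i j k x hx
    obtain ⟨⟨hxi, hxj⟩, hxk⟩ := hx
    show γ i x * g i j x * (γ j x)⁻¹ * (γ j x * g j k x * (γ k x)⁻¹) =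
      γ i x * g i k x * (γ k x)⁻¹
    calc γ i x * g i j x * (γ j x)⁻¹ * (γ j x * g j k x * (γ k x)⁻¹)
        = γ i x * g i j x * ((γ j x)⁻¹ * γ j x) * g j k x * (γ k x)⁻¹ := by
          simp only [mul_assoc]
      _ = γ i x * (g i j x * g j k x) * (γ k x)⁻¹ := by
          rw [hcancel]; simp only [mul_one, mul_assoc]
      _ = γ i x * g i k x * (γ k x)⁻¹ := by
          rw [hcoc i j k x ⟨⟨hxi, hxj⟩, hxk⟩]
  · -- determinant 1
    intro i j x hx
    show (γ i x * g i j x * (γ j x)⁻¹).det = 1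
    rw [Matrix.det_mul, Matrix.det_mul, hdet, hdetinv]
    have h := hcompat i j x hx
    rw [mul_assoc, h]
    exact inv_mul_cancel₀ (Circle.coe_ne_zero _)
  · -- special unitary
    intro i j x hx
    rw [Matrix.mem_specialUnitaryGroup_iff]
    constructor
    · exact mul_mem (mul_mem (hγunit i x) (hgu i j x hx)) (hγinvunit j x)
    · rw [Matrix.det_mul, Matrix.det_mul, hdet, hdetinv, mul_assoc,
        hcompat i j x hx]
      exact inv_mul_cancel₀ (Circle.coe_ne_zero _)
end
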